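/- Let G = (V,E) be a graph embedded in the unit sphere of ℝ^k via vertices x_i ∈ S^{k−1}, i ∈ [n], such that ‖x_i − x_j‖ ≤ δ for every edge (i,j) ∈ E, and such that at least n/3 of the points x_j are at Euclidean distance ≥ c from any fixed x_i, for a constant c > 0. Then for every doubly stochastic symmetric reweighting P supported on E (P(i,j) ≥ 0, P(i,j) = 0 for (i,j) ∉ E, Σ_j P(i,j) = 1, P symmetric), the second smallest eigenvalue of I − P is at most 6δ²/c². In particular λ₂*(G) ≤ 6δ²/c². -/

import Mathlib

open Finset Matrix
open RealInnerProductSpace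

lemma einner_eq {N : ℕ} (a b : EuclideanSpace ℝ (Fin N)) : ⟪a, b⟫ = ∑ i, a i * b i := by
  simp [PiLp.inner_apply, RCLike.inner_apply, conj_trivial]
  exact Finset.sum_congr rfl fun i _ => mul_comm _ _

lemma enorm_sq {N : ℕ} (y : EuclideanSpace ℝ (Fin N)) : ‖y‖ ^ 2 = ∑ t, (y t) ^ 2 := by
  rw [EuclideanSpace.norm_eq, Real.sq_sqrt (by positivity)]
  simp [sq_abs]

lemma sum_sub_sq {n : ℕ} (v : Fin n → ℝ) (hv : ∑ i, v i = 0) :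
    ∑ i, ∑ j, (v i - v j) ^ 2 = 2 * n * ∑ i, (v i) ^ 2 := by
  have h1 : ∀ i : Fin n, ∑ j, (v i - v j) ^ 2
      = (n : ℝ) * v i ^ 2 - 2 * v i * (∑ j, v j) + ∑ j, (v j) ^ 2 := by
    intro i
    have e : ∀ j : Fin n, (v i - v j) ^ 2 = v i ^ 2 - 2 * v i * v j + v j ^ 2 :=
      fun j => by ring
    rw [Finset.sum_congr rfl fun j _ => e j, Finset.sum_add_distrib,
      Finset.sum_sub_distrib, Finset.sum_const, Finset.card_univ, Fintype.card_fin,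
      ← Finset.mul_sum, nsmul_eq_mul]
  rw [Finset.sum_congr rfl fun i _ => h1 i, hv, Finset.sum_add_distrib,
    Finset.sum_sub_distrib, Finset.sum_const, Finset.card_univ, Fintype.card_fin,
    nsmul_eq_mul, ← Finset.sum_mul, ← Finset.mul_sum]
  ring


lemma spec_bound {n : ℕ} (hn : 1 < n) (L : Matrix (Fin n) (Fin n) ℝ) (hL : L.IsHermitian)
    (ev : Fin n → ℝ) (hmono : Monotone ev) (σ : Equiv.Perm (Fin n))
    (hev : ev = hL.eigenvalues ∘ σ) (β : ℝ)
    (w : EuclideanSpace ℝ (Fin n)) (hw : w ≠ 0)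
    (horth : ⟪hL.eigenvectorBasis (σ ⟨0, by omega⟩), w⟫ = 0)
    (hq : ⟪w, Matrix.toEuclideanLin L w⟫ ≤ β * ⟪w, w⟫) :
    ev ⟨1, hn⟩ ≤ β := by
  by_contra hcon
  push_neg at hcon
  set B := hL.eigenvectorBasis with hB
  set μ := hL.eigenvalues with hμ
  set i₀ : Fin n := σ ⟨0, by omega⟩ with hi₀
  have hgt : ∀ i : Fin n, i ≠ i₀ → β < μ i := by
    intro i hi
    have h0 : (σ.symm i).val ≠ 0 := by
      intro h
      apply hi
      have : σ.symm i = (⟨0, by omega⟩ : Fin n) := Fin.ext h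
      rw [hi₀, ← this, Equiv.apply_symm_apply]
    have h1 : (⟨1, hn⟩ : Fin n) ≤ σ.symm i := by
      rw [Fin.le_def]; simp; omega
    have h2 := hmono h1
    have h3 : ev (σ.symm i) = μ i := by
      rw [hev]; simp [hμ]
    linarith
  have hTB : ∀ i, Matrix.toEuclideanLin L (B i) = μ i • B i := fun i =>
    congrArg (WithLp.equiv 2 (Fin n → ℝ)).symm (hL.mulVec_eigenvectorBasis i)
  set cv : Fin n → ℝ := fun i => ⟪B i, w⟫ with hcv
  have hwsum : ∑ i, cv i • B i = w := B.sum_repr' w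
  have hqf : ⟪w, Matrix.toEuclideanLin L w⟫ = ∑ i, μ i * cv i ^ 2 := by
    nth_rewrite 2 [← hwsum]
    rw [map_sum, inner_sum]
    refine Finset.sum_congr rfl fun i _ => ?_
    rw [_root_.map_smul, hTB, inner_smul_right, inner_smul_right, real_inner_comm]
    ring
  have hnorm : ⟪w, w⟫ = ∑ i, cv i ^ 2 := by
    nth_rewrite 2 [← hwsum]
    rw [inner_sum]
    refine Finset.sum_congr rfl fun i _ => ?_
    rw [inner_smul_right, real_inner_comm]
    ring
  have hc0 : cv i₀ = 0 := horth
  have hex : ∃ j, cv j ≠ 0 := by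
    by_contra hno
    push_neg at hno
    apply hw
    rw [← hwsum]
    simp [hno]
  obtain ⟨j, hj⟩ := hex
  have hjne : j ≠ i₀ := fun h => hj (h ▸ hc0)
  have hlt : β * ∑ i, cv i ^ 2 < ∑ i, μ i * cv i ^ 2 := by
    rw [Finset.mul_sum]
    apply Finset.sum_lt_sum
    · intro i _
      by_cases h : i = i₀
      · subst h; simp [hc0]
      · nlinarith [hgt i h, sq_nonneg (cv i)]
    · refine ⟨j, Finset.mem_univ j, ?_⟩
      have h1 := hgt j hjne
      have h2 : 0 < cv j ^ 2 := by positivity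
      nlinarith
  rw [hqf, hnorm] at hq
  linarith

set_option maxHeartbeats 2000000

/-- Spherical proximity graphs have small reweighted spectral gap: if the vertices of
`G` are embedded as unit vectors `x_i ∈ S^{k−1}` with `‖x_i − x_j‖ ≤ δ` on every edge,
and for every `i` at least `n/3` of the points are at distance ≥ `c > 0` from `x_i`,
then for every doubly stochastic symmetric reweighting `P` supported on `E`, the second
smallest eigenvalue of `I − P` is at most `6δ²/c²`. -/
theorem stmt_19 {n k : ℕ} (hn : 1 < n)
    (E : Fin n → Fin n → Prop) (hsymm : Symmetric E)
    (x : Fin n → EuclideanSpace ℝ (Fin k)) (hunit : ∀ i, ‖x i‖ = 1)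
    (δ c : ℝ) (hδ : 0 ≤ δ) (hc : 0 < c)
    (hedge : ∀ i j, E i j → ‖x i - x j‖ ≤ δ)
    (hspread : ∀ i, (n : ℝ) / 3 ≤
      ((Finset.univ.filter fun j => c ≤ ‖x i - x j‖).card : ℝ))
    (P : Fin n → Fin n → ℝ)
    (hP0 : ∀ i j, 0 ≤ P i j) (hPsupp : ∀ i j, ¬ E i j → P i j = 0)
    (hProw : ∀ i, ∑ j, P i j = 1) (hPsym : ∀ i j, P i j = P j i)
    (hL : ((1 : Matrix (Fin n) (Fin n) ℝ) - Matrix.of (fun i j => P i j)).IsHermitian)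
    (ev : Fin n → ℝ) (hmono : Monotone ev)
    (hev : ∃ σ : Equiv.Perm (Fin n), ev = hL.eigenvalues ∘ σ) :
    ev ⟨1, hn⟩ ≤ 6 * δ ^ 2 / c ^ 2 := by
  obtain ⟨σ, hev⟩ := hev
  set L : Matrix (Fin n) (Fin n) ℝ := 1 - Matrix.of (fun i j => P i j) with hLdef
  have hnpos : (0 : ℝ) < n := by positivity
  set β : ℝ := 6 * δ ^ 2 / c ^ 2 with hβ
  have hβ0 : 0 ≤ β := by positivity
  have hcol : ∀ j, ∑ i, P i j = 1 := fun j => by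
    rw [Finset.sum_congr rfl fun i _ => hPsym i j]; exact hProw j
  -- centered coordinates
  set b : Fin k → Fin n → ℝ := fun t i => x i t - (n : ℝ)⁻¹ * ∑ j, x j t with hb
  have hbsum : ∀ t, ∑ i, b t i = 0 := by
    intro t
    rw [hb]
    rw [Finset.sum_sub_distrib, Finset.sum_const, Finset.card_univ, Fintype.card_fin,
      nsmul_eq_mul]
    field_simp
    ring
  have hnormsq : ∀ i j : Fin n, ‖x i - x j‖ ^ 2 = ∑ t, (b t i - b t j) ^ 2 := by
    intro i j
    rw [enorm_sq]
    refine Finset.sum_congr rfl fun t _ => ?_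
    have : (x i - x j) t = x i t - x j t := rfl
    rw [this, hb]
    ring
  set N : Fin k → ℝ := fun t => ∑ i, ∑ j, P i j * (b t i - b t j) ^ 2 with hN
  set D : Fin k → ℝ := fun t => ∑ i, (b t i) ^ 2 with hD
  have hD0 : ∀ t, 0 ≤ D t := fun t => Finset.sum_nonneg fun i _ => sq_nonneg _
  have hN0 : ∀ t, 0 ≤ N t := fun t => Finset.sum_nonneg fun i _ =>
    Finset.sum_nonneg fun j _ => mul_nonneg (hP0 i j) (sq_nonneg _)
  -- numerator bound
  have hNtot : ∑ t, N t ≤ (n : ℝ) * δ ^ 2 := by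
    have h1 : ∑ t, N t = ∑ i, ∑ j, P i j * ‖x i - x j‖ ^ 2 := by
      rw [Finset.sum_comm]
      refine Finset.sum_congr rfl fun i _ => ?_
      rw [Finset.sum_comm]
      refine Finset.sum_congr rfl fun j _ => ?_
      rw [← Finset.mul_sum, hnormsq i j]
    rw [h1]
    have h2 : ∀ i j : Fin n, P i j * ‖x i - x j‖ ^ 2 ≤ P i j * δ ^ 2 := by
      intro i j
      by_cases hPij : P i j = 0
      · simp [hPij]
      · have hEij : E i j := by
          by_contra hE
          exact hPij (hPsupp i j hE)
        have hle := hedge i j hEij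
        have hnn : (0:ℝ) ≤ ‖x i - x j‖ := norm_nonneg _
        have : ‖x i - x j‖ ^ 2 ≤ δ ^ 2 := by nlinarith
        exact mul_le_mul_of_nonneg_left this (hP0 i j)
    calc ∑ i, ∑ j, P i j * ‖x i - x j‖ ^ 2
        ≤ ∑ i, ∑ j, P i j * δ ^ 2 :=
          Finset.sum_le_sum fun i _ => Finset.sum_le_sum fun j _ => h2 i j
      _ = ∑ i : Fin n, δ ^ 2 := by
          refine Finset.sum_congr rfl fun i _ => ?_
          rw [← Finset.sum_mul, hProw i, one_mul]
      _ = (n : ℝ) * δ ^ 2 := by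
          rw [Finset.sum_const, Finset.card_univ, Fintype.card_fin, nsmul_eq_mul]
  -- denominator bound
  have hDtot : (n : ℝ) * c ^ 2 / 6 ≤ ∑ t, D t := by
    have hsp : ∀ i, (n : ℝ) / 3 * c ^ 2 ≤ ∑ j, ‖x i - x j‖ ^ 2 := by
      intro i
      calc (n : ℝ) / 3 * c ^ 2
          ≤ ((Finset.univ.filter fun j => c ≤ ‖x i - x j‖).card : ℝ) * c ^ 2 :=
            mul_le_mul_of_nonneg_right (hspread i) (sq_nonneg c)
        _ = ∑ _j ∈ Finset.univ.filter fun j => c ≤ ‖x i - x j‖, c ^ 2 := by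
            rw [Finset.sum_const, nsmul_eq_mul]
        _ ≤ ∑ j ∈ Finset.univ.filter fun j => c ≤ ‖x i - x j‖, ‖x i - x j‖ ^ 2 := by
            refine Finset.sum_le_sum fun j hj => ?_
            have hcj := (Finset.mem_filter.mp hj).2
            nlinarith [hc.le]
        _ ≤ ∑ j, ‖x i - x j‖ ^ 2 :=
            Finset.sum_le_sum_of_subset_of_nonneg (Finset.filter_subset _ _)
              (fun j _ _ => sq_nonneg _)
    have h2 : ∑ t, ∑ i, ∑ j, (b t i - b t j) ^ 2 = ∑ i, ∑ j, ‖x i - x j‖ ^ 2 := by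
      rw [Finset.sum_comm]
      refine Finset.sum_congr rfl fun i _ => ?_
      rw [Finset.sum_comm]
      exact Finset.sum_congr rfl fun j _ => (hnormsq i j).symm
    have h3 : ∑ t, ∑ i, ∑ j, (b t i - b t j) ^ 2 = 2 * n * ∑ t, D t := by
      rw [Finset.sum_congr rfl fun t _ => sum_sub_sq (b t) (hbsum t), ← Finset.mul_sum]
    have h4 : (n : ℝ) * ((n : ℝ) / 3 * c ^ 2) ≤ ∑ i, ∑ j, ‖x i - x j‖ ^ 2 := by
      calc (n : ℝ) * ((n : ℝ) / 3 * c ^ 2) = ∑ _i : Fin n, (n : ℝ) / 3 * c ^ 2 := by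
            rw [Finset.sum_const, Finset.card_univ, Fintype.card_fin, nsmul_eq_mul]
        _ ≤ ∑ i, ∑ j, ‖x i - x j‖ ^ 2 := Finset.sum_le_sum fun i _ => hsp i
    rw [← h2, h3] at h4
    nlinarith
  -- good coordinate
  have hgood : ∃ t, 0 < D t ∧ N t ≤ 2 * β * D t := by
    by_contra hno
    push_neg at hno
    have hband : ∀ t, 2 * β * D t ≤ N t := by
      intro t
      rcases lt_or_eq_of_le (hD0 t) with h | h
      · exact (hno t h).le
      · rw [← h, mul_zero]; exact hN0 t
    have hexD : ∃ t, 0 < D t := by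
      by_contra hnoD
      push_neg at hnoD
      have : ∑ t, D t = 0 :=
        le_antisymm (Finset.sum_nonpos fun t _ => hnoD t) (Finset.sum_nonneg fun t _ => hD0 t)
      rw [this] at hDtot
      nlinarith [mul_pos hnpos (pow_pos hc 2)]
    obtain ⟨t₀, ht₀⟩ := hexD
    have hstrict : 2 * β * ∑ t, D t < ∑ t, N t := by
      rw [Finset.mul_sum]
      exact Finset.sum_lt_sum (fun t _ => hband t) ⟨t₀, Finset.mem_univ t₀, hno t₀ ht₀⟩
    have hb1 : 2 * β * ((n : ℝ) * c ^ 2 / 6) ≤ 2 * β * ∑ t, D t := by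
      apply mul_le_mul_of_nonneg_left hDtot (by positivity)
    have hbeq : 2 * β * ((n : ℝ) * c ^ 2 / 6) = 2 * ((n : ℝ) * δ ^ 2) := by
      rw [hβ]; field_simp
    nlinarith
  obtain ⟨t, hDt, hNt⟩ := hgood
  -- test vectors
  set a : EuclideanSpace ℝ (Fin n) := WithLp.toLp 2 (fun _ => (1 : ℝ)) with ha
  set bb : EuclideanSpace ℝ (Fin n) := WithLp.toLp 2 (fun i => b t i) with hbb
  have hTcoord : ∀ (v : EuclideanSpace ℝ (Fin n)) (i : Fin n),
      (Matrix.toEuclideanLin L v) i = v i - ∑ j, P i j * v j := by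
    intro v i
    show (L *ᵥ v) i = v i - ∑ j, P i j * v j
    rw [hLdef, Matrix.sub_mulVec, Matrix.one_mulVec]
    simp [Matrix.mulVec, dotProduct]
  have haa : ⟪a, a⟫ = (n : ℝ) := by
    rw [einner_eq]
    simp [ha]
  have hab : ⟪a, bb⟫ = 0 := by
    rw [einner_eq]
    simpa [ha, hbb] using hbsum t
  have hbbnorm : ⟪bb, bb⟫ = D t := by
    rw [einner_eq]
    exact Finset.sum_congr rfl fun i _ => (sq (b t i)).symm ▸ by ring
  have hTa : Matrix.toEuclideanLin L a = 0 := by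
    apply (WithLp.equiv 2 (Fin n → ℝ)).injective
    funext i
    show (Matrix.toEuclideanLin L a) i = 0
    rw [hTcoord a i]
    simp [ha, hProw i]
  have haTbb : ⟪a, Matrix.toEuclideanLin L bb⟫ = 0 := by
    rw [einner_eq]
    have : ∀ i, a i * (Matrix.toEuclideanLin L bb) i = bb i - ∑ j, P i j * bb j := by
      intro i
      rw [hTcoord bb i]
      simp [ha]
    rw [Finset.sum_congr rfl fun i _ => this i, Finset.sum_sub_distrib]
    rw [Finset.sum_comm]
    have hc2 : ∀ j, ∑ i, P i j * bb j = bb j := by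
      intro j
      rw [← Finset.sum_mul, hcol j, one_mul]
    rw [Finset.sum_congr rfl fun j _ => hc2 j]
    have := hbsum t
    simp only [hbb]
    rw [this]
    ring
  have hbbTbb : ⟪bb, Matrix.toEuclideanLin L bb⟫ ≤ β * D t := by
    have hq1 : ⟪bb, Matrix.toEuclideanLin L bb⟫
        = D t - ∑ i, ∑ j, P i j * (b t i * b t j) := by
      rw [einner_eq]
      have : ∀ i, bb i * (Matrix.toEuclideanLin L bb) i
          = (b t i) ^ 2 - ∑ j, P i j * (b t i * b t j) := by
        intro i
        rw [hTcoord bb i]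
        rw [mul_sub, Finset.mul_sum]
        congr 1
        · simp only [hbb]; ring
        · exact Finset.sum_congr rfl fun j _ => by simp only [hbb]; ring
      rw [Finset.sum_congr rfl fun i _ => this i, Finset.sum_sub_distrib]
    have hN2 : N t = 2 * D t - 2 * ∑ i, ∑ j, P i j * (b t i * b t j) := by
      have e1 : ∑ i, ∑ j, P i j * (b t i) ^ 2 = ∑ i, (b t i) ^ 2 := by
        refine Finset.sum_congr rfl fun i _ => ?_
        rw [← Finset.sum_mul, hProw i, one_mul]
      have e2 : ∑ i, ∑ j, P i j * (b t j) ^ 2 = ∑ i, (b t i) ^ 2 := by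
        rw [Finset.sum_comm]
        refine Finset.sum_congr rfl fun j _ => ?_
        rw [← Finset.sum_mul, hcol j, one_mul]
      have expand : N t = (∑ i, ∑ j, P i j * (b t i) ^ 2) + (∑ i, ∑ j, P i j * (b t j) ^ 2)
          - 2 * ∑ i, ∑ j, P i j * (b t i * b t j) := by
        show (∑ i, ∑ j, P i j * (b t i - b t j) ^ 2) = _
        rw [← Finset.sum_add_distrib, Finset.mul_sum, ← Finset.sum_sub_distrib]
        refine Finset.sum_congr rfl fun i _ => ?_
        rw [← Finset.sum_add_distrib, Finset.mul_sum, ← Finset.sum_sub_distrib]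
        exact Finset.sum_congr rfl fun j _ => by ring
      rw [expand, e1, e2]
      show _ = 2 * (∑ i, (b t i) ^ 2) - _
      ring
    have : D t - ∑ i, ∑ j, P i j * (b t i * b t j) = N t / 2 := by
      rw [hN2]; ring
    rw [hq1, this]
    linarith
  have hbb0 : bb ≠ 0 := by
    intro h
    rw [h] at hbbnorm
    simp at hbbnorm
    rw [← hbbnorm] at hDt
    exact lt_irrefl _ hDt
  -- choose test vector orthogonal to bottom eigenvector
  set u : EuclideanSpace ℝ (Fin n) := hL.eigenvectorBasis (σ ⟨0, by omega⟩) with hu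
  by_cases hbu : ⟪u, bb⟫ = 0
  · refine spec_bound hn L hL ev hmono σ hev β bb hbb0 hbu ?_
    rw [hbbnorm]
    exact hbbTbb
  · set s : ℝ := ⟪u, bb⟫ with hs
    set r : ℝ := -⟪u, a⟫ with hr
    set w : EuclideanSpace ℝ (Fin n) := s • a + r • bb with hw
    have horth : ⟪u, w⟫ = 0 := by
      rw [hw, inner_add_right, real_inner_smul_right, real_inner_smul_right]
      rw [hs, hr]
      ring
    have hwa : ⟪a, w⟫ = s * n := by
      rw [hw, inner_add_right, real_inner_smul_right, real_inner_smul_right, haa, hab]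
      ring
    have hw0 : w ≠ 0 := by
      intro h
      rw [h, inner_zero_right] at hwa
      have hs0 : s = 0 := by
        rcases mul_eq_zero.mp hwa.symm with h' | h'
        · exact h'
        · exact absurd h' hnpos.ne'
      exact hbu hs0
    have hTw : Matrix.toEuclideanLin L w = r • Matrix.toEuclideanLin L bb := by
      rw [hw, map_add, _root_.map_smul, _root_.map_smul, hTa, smul_zero, zero_add]
    have hqw : ⟪w, Matrix.toEuclideanLin L w⟫ ≤ β * ⟪w, w⟫ := by
      have h1 : ⟪w, Matrix.toEuclideanLin L w⟫ = r ^ 2 * ⟪bb, Matrix.toEuclideanLin L bb⟫ := by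
        rw [hTw]
        simp only [hTw, hw, inner_add_left, real_inner_smul_left, real_inner_smul_right, haTbb]
        ring
      have h2 : ⟪w, w⟫ = s ^ 2 * n + r ^ 2 * D t := by
        simp only [hw, inner_add_left, inner_add_right, real_inner_smul_left,
          real_inner_smul_right, haa, hab, real_inner_comm a bb, hbbnorm]
        ring
      rw [h1, h2]
      have : r ^ 2 * ⟪bb, Matrix.toEuclideanLin L bb⟫ ≤ r ^ 2 * (β * D t) :=
        mul_le_mul_of_nonneg_left hbbTbb (sq_nonneg r)
      nlinarith [this, mul_nonneg hβ0 (mul_nonneg (sq_nonneg s) hnpos.le)]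
    exact spec_bound hn L hL ev hmono σ hev β w hw0 horth hqw
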